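/- Let a_n be the total bitsum summed over all persolus binary strings of length n. Then ∑_{n≥0} a_n z^n = z(1 - z + z^2)^2/(1 - z - z^3)^2 as formal power series; in particular a_1 = 1, a_2 = 0, a_3 = 2, a_4 = 4, a_5 = 5, a_6 = 10. -/

import Mathlib

open scoped Classical

def Solus {n : ℕ} (f : Fin n → Bool) : Prop :=
  ∀ i : ℕ, ∀ h : i + 1 < n, ¬(f ⟨i, by omega⟩ = true ∧ f ⟨i + 1, h⟩ = true)

def ZeroNbr {n : ℕ} (f : Fin n → Bool) : Prop :=
  ∀ i : Fin n, f i = false →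
    ∃ j : Fin n, (j.val = i.val + 1 ∨ j.val + 1 = i.val) ∧ f j = false

def Persolus {n : ℕ} (f : Fin n → Bool) : Prop := Solus f ∧ ZeroNbr f

def bitsum {n : ℕ} (f : Fin n → Bool) : ℕ := (Finset.univ.filter fun i => f i = true).card

/-- Total bitsum over all persolus bitstrings of length `n`. -/
noncomputable def persolusBitsum (n : ℕ) : ℕ :=
  ∑ f : Fin n → Bool, if Persolus f then bitsum f else 0

open Finset

noncomputable def Dset (n : ℕ) : Finset (Fin n → Bool) :=
  Finset.univ.filter fun f => Persolus f ∧ ∀ h : 0 < n, f ⟨0, h⟩ = false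

noncomputable def dcnt (n : ℕ) : ℕ := (Dset n).card

lemma mem_Dset {n : ℕ} {f : Fin n → Bool} :
    f ∈ Dset n ↔ Persolus f ∧ ∀ h : 0 < n, f ⟨0, h⟩ = false := by
  simp [Dset]

lemma fval {m : ℕ} (f : Fin m → Bool) {a b : ℕ} {ha : a < m} {hb : b < m} {c : Bool}
    (hab : a = b) (h : f ⟨b, hb⟩ = c) : f ⟨a, ha⟩ = c := by subst hab; exact h

lemma bff {b : Bool} (h : ¬ b = true) : b = false := by
  cases b
  · rfl
  · exact absurd rfl h

lemma bft {b : Bool} (h : ¬ b = false) : b = true := by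
  cases b
  · exact absurd rfl h
  · rfl

lemma Dset_snd {m : ℕ} {f : Fin m → Bool} (hf : f ∈ Dset m) (hm : 2 ≤ m) :
    f ⟨1, by omega⟩ = false := by
  rw [mem_Dset] at hf
  obtain ⟨⟨hs, hz⟩, h0⟩ := hf
  obtain ⟨j, hj, hfj⟩ := hz ⟨0, by omega⟩ (h0 (by omega))
  have hjlt := j.isLt
  have hj' : (j:ℕ) = 1 ∨ (j:ℕ) + 1 = 0 := by simpa using hj
  exact fval f (show (1:ℕ) = (j:ℕ) by omega) hfj

lemma dcnt0 : dcnt 0 = 1 := by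
  have h : Dset 0 = Finset.univ := by
    apply Finset.filter_true_of_mem
    intro f _
    exact ⟨⟨fun i h => by omega, fun i => i.elim0⟩, fun h => by omega⟩
  simp [dcnt, h]

lemma dcnt1 : dcnt 1 = 0 := by
  have h : Dset 1 = ∅ := by
    ext f
    simp only [Dset, Finset.mem_filter, Finset.mem_univ, true_and, Finset.notMem_empty,
      iff_false]
    rintro ⟨⟨hs, hz⟩, h0⟩
    obtain ⟨j, hj, hfj⟩ := hz ⟨0, one_pos⟩ (h0 one_pos)
    have := j.isLt; omega
  simp [dcnt, h]

lemma dcnt2 : dcnt 2 = 1 := by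
  have h : Dset 2 = {fun _ => false} := by
    ext f
    simp only [Dset, mem_filter, mem_univ, true_and, Finset.mem_singleton]
    constructor
    · rintro ⟨⟨hs, hz⟩, h0⟩
      have h0' : f ⟨0, by omega⟩ = false := h0 (by omega)
      have h1 : f ⟨1, by omega⟩ = false := by
        obtain ⟨j, hj, hfj⟩ := hz ⟨0, by omega⟩ h0'
        have hjv := j.isLt
        have hj' : (j:ℕ) = 1 ∨ (j:ℕ) + 1 = 0 := by simpa using hj
        have : j = ⟨1, by omega⟩ := Fin.ext (show j.val = 1 by omega)
        rwa [this] at hfj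
      funext i
      match i with
      | ⟨0, _⟩ => exact h0'
      | ⟨1, _⟩ => exact h1
    · rintro rfl
      refine ⟨⟨fun i h => by simp, fun i _ => ⟨⟨1 - i.val, by omega⟩, ?_, rfl⟩⟩, fun _ => rfl⟩
      have := i.isLt
      simp only []
      omega
  simp [dcnt, h]

lemma dcnt_rec (n : ℕ) : dcnt (n + 3) = dcnt (n + 2) + dcnt n := by
  rw [dcnt, ← Finset.card_filter_add_card_filter_not
    (p := fun f : Fin (n+3) → Bool => f ⟨2, by omega⟩ = false)]
  congr 1
  · -- tail bijection onto Dset (n+2)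
    rw [dcnt]
    refine Finset.card_nbij'
      (i := fun f => fun i : Fin (n+2) => f ⟨i.val + 1, by omega⟩)
      (j := fun w => fun i : Fin (n+3) =>
        match (i : ℕ), i.isLt with
        | 0, _ => false
        | (j+1), h => w ⟨j, by omega⟩)
      ?_ ?_ ?_ ?_
    · intro f hf
      simp only [Finset.mem_coe, Finset.mem_filter] at hf
      obtain ⟨hfD, h2⟩ := hf
      have h0 : f ⟨0, by omega⟩ = false := (mem_Dset.mp hfD).2 (by omega)
      have h1 : f ⟨1, by omega⟩ = false := Dset_snd hfD (by omega)
      obtain ⟨⟨hs, hz⟩, -⟩ := mem_Dset.mp hfD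
      rw [Finset.mem_coe, mem_Dset]
      refine ⟨⟨?_, ?_⟩, ?_⟩
      · intro i hi hc
        have hc1 : f ⟨i + 1, by omega⟩ = true := hc.1
        have hc2 : f ⟨i + 1 + 1, by omega⟩ = true := hc.2
        exact hs (i + 1) (by omega) ⟨hc1, hc2⟩
      · intro i hgi
        by_cases hi0 : (i : ℕ) = 0
        · refine ⟨⟨1, by omega⟩, Or.inl (show (1:ℕ) = (i:ℕ) + 1 by omega), ?_⟩
          show f ⟨1 + 1, by omega⟩ = false
          exact fval f (by omega) h2
        · obtain ⟨j, hj, hfj⟩ := hz ⟨(i:ℕ) + 1, by omega⟩ hgi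
          have hjlt := j.isLt
          have hjn : (j:ℕ) = (i:ℕ) + 1 + 1 ∨ (j:ℕ) + 1 = (i:ℕ) + 1 := hj
          have hj' : (j:ℕ) = (i:ℕ) + 2 ∨ (j:ℕ) = (i:ℕ) := by omega
          refine ⟨⟨(j:ℕ) - 1, by omega⟩, ?_, ?_⟩
          · show (j:ℕ) - 1 = (i:ℕ) + 1 ∨ (j:ℕ) - 1 + 1 = (i:ℕ)
            omega
          · show f ⟨(j:ℕ) - 1 + 1, by omega⟩ = false
            exact fval f (by omega) hfj
      · intro h
        show f ⟨0 + 1, by omega⟩ = false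
        exact fval f (by omega) h1
    · intro w hw
      have h0' : w ⟨0, by omega⟩ = false := (mem_Dset.mp hw).2 (by omega)
      have h1' : w ⟨1, by omega⟩ = false := Dset_snd hw (by omega)
      obtain ⟨⟨hs, hz⟩, -⟩ := mem_Dset.mp hw
      simp only [Finset.mem_coe, Finset.mem_filter]
      refine ⟨mem_Dset.mpr ⟨⟨?_, ?_⟩, ?_⟩, ?_⟩
      · intro i hi hc
        rcases i with _ | i
        · exact Bool.noConfusion hc.1
        · exact hs i (by omega) ⟨hc.1, hc.2⟩
      · rintro ⟨iv, hlt⟩ hfalse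
        rcases iv with _ | iv
        · exact ⟨⟨1, by omega⟩, Or.inl (show (1:ℕ) = 0 + 1 by omega), h0'⟩
        · obtain ⟨j, hj, hfj⟩ := hz ⟨iv, by omega⟩ hfalse
          refine ⟨⟨(j:ℕ) + 1, by omega⟩, ?_, ?_⟩
          · show (j:ℕ) + 1 = iv + 1 + 1 ∨ (j:ℕ) + 1 + 1 = iv + 1
            have : (j:ℕ) = iv + 1 ∨ (j:ℕ) + 1 = iv := hj
            omega
          · show w ⟨(j:ℕ), by omega⟩ = false
            exact hfj
      · intro h; rfl
      · show w ⟨1, by omega⟩ = false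
        exact h1'
    · intro f hf
      simp only [Finset.mem_coe, Finset.mem_filter] at hf
      obtain ⟨hfD, h2⟩ := hf
      have h0 : f ⟨0, by omega⟩ = false := (mem_Dset.mp hfD).2 (by omega)
      funext i
      rcases i with ⟨iv, hlt⟩
      rcases iv with _ | iv
      · exact h0.symm
      · rfl
    · intro w _
      funext i
      rcases i with ⟨iv, hlt⟩
      rfl
  · -- head [0,0,1] bijection onto Dset n
    rw [dcnt]
    refine Finset.card_nbij'
      (i := fun f => fun i : Fin n => f ⟨i.val + 3, by omega⟩)
      (j := fun v => fun i : Fin (n+3) =>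
        match (i : ℕ), i.isLt with
        | 0, _ => false
        | 1, _ => false
        | 2, _ => true
        | (j+3), h => v ⟨j, by omega⟩)
      ?_ ?_ ?_ ?_
    · intro f hf
      simp only [Finset.mem_coe, Finset.mem_filter] at hf
      obtain ⟨hfD, h2'⟩ := hf
      have h2 : f ⟨2, by omega⟩ = true := bft h2'
      have h0 : f ⟨0, by omega⟩ = false := (mem_Dset.mp hfD).2 (by omega)
      obtain ⟨⟨hs, hz⟩, -⟩ := mem_Dset.mp hfD
      rw [Finset.mem_coe, mem_Dset]
      refine ⟨⟨?_, ?_⟩, ?_⟩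
      · intro i hi hc
        have hc1 : f ⟨i + 3, by omega⟩ = true := hc.1
        have hc2 : f ⟨i + 3 + 1, by omega⟩ = true := hc.2
        exact hs (i + 3) (by omega) ⟨hc1, hc2⟩
      · intro i hgi
        obtain ⟨j, hj, hfj⟩ := hz ⟨(i:ℕ) + 3, by omega⟩ hgi
        have hjlt := j.isLt
        have hj2 : (j:ℕ) ≠ 2 := by
          intro hc
          have hfj2 : f ⟨2, by omega⟩ = false := fval f hc.symm hfj
          rw [hfj2] at h2
          exact Bool.noConfusion h2
        have hj' : (j:ℕ) = (i:ℕ) + 3 + 1 ∨ (j:ℕ) + 1 = (i:ℕ) + 3 := hj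
        refine ⟨⟨(j:ℕ) - 3, by omega⟩, ?_, ?_⟩
        · show (j:ℕ) - 3 = (i:ℕ) + 1 ∨ (j:ℕ) - 3 + 1 = (i:ℕ)
          omega
        · show f ⟨(j:ℕ) - 3 + 3, by omega⟩ = false
          exact fval f (by omega) hfj
      · intro h
        show f ⟨0 + 3, by omega⟩ = false
        have := hs 2 (by omega)
        have h3 : ¬ f ⟨3, by omega⟩ = true := fun hc => this ⟨h2, hc⟩
        exact fval f (by omega) (bff h3)
    · intro v hv
      obtain ⟨⟨hs, hz⟩, h0v⟩ := mem_Dset.mp hv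
      simp only [Finset.mem_coe, Finset.mem_filter]
      refine ⟨mem_Dset.mpr ⟨⟨?_, ?_⟩, ?_⟩, ?_⟩
      · intro i hi hc
        rcases i with _ | (_ | (_ | i))
        · exact Bool.noConfusion hc.1
        · exact Bool.noConfusion hc.1
        · -- i = 2 : second component is v 0, which is false
          have hv0 : v ⟨0, by omega⟩ = false := h0v (by omega)
          have hcontra : v ⟨0, by omega⟩ = true := hc.2
          rw [hv0] at hcontra
          exact Bool.noConfusion hcontra
        · exact hs i (by omega) ⟨hc.1, hc.2⟩
      · rintro ⟨iv, hlt⟩ hfalse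
        rcases iv with _ | (_ | (_ | iv))
        · exact ⟨⟨1, by omega⟩, Or.inl (show (1:ℕ) = 0 + 1 by omega), rfl⟩
        · exact ⟨⟨0, by omega⟩, Or.inr (show (0:ℕ) + 1 = 1 by omega), rfl⟩
        · exact Bool.noConfusion hfalse
        · obtain ⟨j, hj, hfj⟩ := hz ⟨iv, by omega⟩ hfalse
          refine ⟨⟨(j:ℕ) + 3, by omega⟩, ?_, ?_⟩
          · show (j:ℕ) + 3 = iv + 3 + 1 ∨ (j:ℕ) + 3 + 1 = iv + 3
            have : (j:ℕ) = iv + 1 ∨ (j:ℕ) + 1 = iv := hj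
            omega
          · show v ⟨(j:ℕ), by omega⟩ = false
            exact hfj
      · intro h; rfl
      · intro hc
        exact Bool.noConfusion hc
    · intro f hf
      simp only [Finset.mem_coe, Finset.mem_filter] at hf
      obtain ⟨hfD, h2'⟩ := hf
      have h2 : f ⟨2, by omega⟩ = true := bft h2'
      have h0 : f ⟨0, by omega⟩ = false := (mem_Dset.mp hfD).2 (by omega)
      have h1 : f ⟨1, by omega⟩ = false := Dset_snd hfD (by omega)
      funext i
      rcases i with ⟨iv, hlt⟩
      rcases iv with _ | (_ | (_ | iv))
      · exact h0.symm
      · exact h1.symm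
      · exact h2.symm
      · rfl
    · intro v _
      funext i
      rcases i with ⟨iv, hlt⟩
      rfl

noncomputable def Eset (n : ℕ) : Finset (Fin n → Bool) :=
  Finset.univ.filter fun f => Persolus f ∧ ∀ h : 0 < n, f ⟨n - 1, by omega⟩ = false

lemma mem_Eset {n : ℕ} {f : Fin n → Bool} :
    f ∈ Eset n ↔ Persolus f ∧ ∀ h : 0 < n, f ⟨n - 1, by omega⟩ = false := by
  simp [Eset]

lemma persolus_rev {n : ℕ} {f : Fin n → Bool} (hf : Persolus f) :
    Persolus (fun i : Fin n => f ⟨n - 1 - i.val, by have := i.isLt; omega⟩) := by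
  obtain ⟨hs, hz⟩ := hf
  constructor
  · intro i hi hc
    have hc1 : f ⟨n - 1 - i, by omega⟩ = true := hc.1
    have hc2 : f ⟨n - 1 - (i + 1), by omega⟩ = true := hc.2
    refine hs (n - 2 - i) (by omega) ⟨?_, ?_⟩
    · exact fval f (by omega) hc2
    · exact fval f (by omega) hc1
  · rintro ⟨iv, hlt⟩ hfalse
    have hf' : f ⟨n - 1 - iv, by omega⟩ = false := hfalse
    obtain ⟨j, hj, hfj⟩ := hz _ hf'
    have hjlt := j.isLt
    have hjn : (j:ℕ) = (n - 1 - iv) + 1 ∨ (j:ℕ) + 1 = n - 1 - iv := hj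
    refine ⟨⟨n - 1 - (j:ℕ), by omega⟩, ?_, ?_⟩
    · show n - 1 - (j:ℕ) = iv + 1 ∨ n - 1 - (j:ℕ) + 1 = iv
      omega
    · show f ⟨n - 1 - (n - 1 - (j:ℕ)), by omega⟩ = false
      exact fval f (by omega) hfj

lemma ecnt_eq (n : ℕ) : (Eset n).card = dcnt n := by
  rw [dcnt]
  refine Finset.card_nbij'
    (i := fun f => fun i : Fin n => f ⟨n - 1 - i.val, by have := i.isLt; omega⟩)
    (j := fun f => fun i : Fin n => f ⟨n - 1 - i.val, by have := i.isLt; omega⟩) ?_ ?_ ?_ ?_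
  · intro f hf
    obtain ⟨hp, hlast⟩ := mem_Eset.mp hf
    rw [Finset.mem_coe, mem_Dset]
    refine ⟨persolus_rev hp, ?_⟩
    intro h
    show f ⟨n - 1 - 0, by omega⟩ = false
    exact fval f (by omega) (hlast h)
  · intro f hf
    obtain ⟨hp, hfirst⟩ := mem_Dset.mp hf
    rw [Finset.mem_coe, mem_Eset]
    refine ⟨persolus_rev hp, ?_⟩
    intro h
    show f ⟨n - 1 - (n - 1), by omega⟩ = false
    exact fval f (by omega) (hfirst h)
  · intro f _
    funext i
    obtain ⟨iv, h⟩ := i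
    show f ⟨n - 1 - (n - 1 - iv), by omega⟩ = f ⟨iv, h⟩
    exact fval f (by omega) rfl
  · intro f _
    funext i
    obtain ⟨iv, h⟩ := i
    show f ⟨n - 1 - (n - 1 - iv), by omega⟩ = f ⟨iv, h⟩
    exact fval f (by omega) rfl

def glue (k m : ℕ) (u : Fin k → Bool) (v : Fin m → Bool) : Fin (k + 1 + m) → Bool :=
  fun i => if h : i.val < k then u ⟨i.val, h⟩
    else if h2 : i.val = k then true
    else v ⟨i.val - (k + 1), by have := i.isLt; omega⟩

lemma glue_lt {k m : ℕ} (u : Fin k → Bool) (v : Fin m → Bool) {i : ℕ} (hik : i < k)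
    (h : i < k + 1 + m) : glue k m u v ⟨i, h⟩ = u ⟨i, hik⟩ := by
  show (if h' : i < k then u ⟨i, h'⟩ else if h2 : i = k then true
    else v ⟨i - (k + 1), by omega⟩) = u ⟨i, hik⟩
  rw [dif_pos hik]

lemma glue_mid {k m : ℕ} (u : Fin k → Bool) (v : Fin m → Bool)
    (h : k < k + 1 + m) : glue k m u v ⟨k, h⟩ = true := by
  show (if h' : k < k then u ⟨k, h'⟩ else if h2 : k = k then true
    else v ⟨k - (k + 1), by omega⟩) = true
  rw [dif_neg (by omega), dif_pos rfl]

lemma glue_gt {k m : ℕ} (u : Fin k → Bool) (v : Fin m → Bool) {i : ℕ} (hik : k < i)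
    (h : i < k + 1 + m) (h2 : i - (k + 1) < m) :
    glue k m u v ⟨i, h⟩ = v ⟨i - (k + 1), h2⟩ := by
  show (if h' : i < k then u ⟨i, h'⟩ else if h2' : i = k then true
    else v ⟨i - (k + 1), by omega⟩) = v ⟨i - (k + 1), h2⟩
  rw [dif_neg (by omega), dif_neg (by omega)]

lemma count_marked (k m : ℕ) :
    (Finset.univ.filter fun f : Fin (k + 1 + m) → Bool =>
        Persolus f ∧ f ⟨k, by omega⟩ = true).card
      = (Eset k).card * dcnt m := by
  rw [dcnt, ← Finset.card_product]
  refine Finset.card_nbij'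
    (i := fun f => (fun i : Fin k => f ⟨i.val, by have := i.isLt; omega⟩,
                    fun j : Fin m => f ⟨k + 1 + j.val, by have := j.isLt; omega⟩))
    (j := fun p => glue k m p.1 p.2) ?_ ?_ ?_ ?_
  · intro f hf
    simp only [Finset.mem_coe, Finset.mem_filter] at hf
    obtain ⟨-, ⟨hs, hz⟩, hktrue⟩ := hf
    rw [Finset.mem_coe, Finset.mem_product]
    constructor
    · rw [mem_Eset]
      refine ⟨⟨?_, ?_⟩, ?_⟩
      · intro i hi hc
        have hc1 : f ⟨i, by omega⟩ = true := hc.1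
        have hc2 : f ⟨i + 1, by omega⟩ = true := hc.2
        exact hs i (by omega) ⟨hc1, hc2⟩
      · rintro ⟨iv, hlt⟩ hfalse
        have hf' : f ⟨iv, by omega⟩ = false := hfalse
        obtain ⟨j, hj, hfj⟩ := hz _ hf'
        have hjlt := j.isLt
        have hjn : (j:ℕ) = iv + 1 ∨ (j:ℕ) + 1 = iv := hj
        have hjk : (j:ℕ) ≠ k := by
          intro hc
          have : f ⟨k, by omega⟩ = false := fval f hc.symm hfj
          rw [this] at hktrue
          exact Bool.noConfusion hktrue
        refine ⟨⟨(j:ℕ), by omega⟩, ?_, ?_⟩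
        · show (j:ℕ) = iv + 1 ∨ (j:ℕ) + 1 = iv
          omega
        · show f ⟨(j:ℕ), by omega⟩ = false
          exact fval f rfl hfj
      · intro h
        show f ⟨k - 1, by omega⟩ = false
        have hnt : ¬ f ⟨k - 1, by omega⟩ = true := by
          intro hc
          exact hs (k - 1) (by omega) ⟨hc, fval f (by omega) hktrue⟩
        exact bff hnt
    · rw [mem_Dset]
      refine ⟨⟨?_, ?_⟩, ?_⟩
      · intro i hi hc
        have hc1 : f ⟨k + 1 + i, by omega⟩ = true := hc.1
        have hc2 : f ⟨k + 1 + (i + 1), by omega⟩ = true := hc.2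
        exact hs (k + 1 + i) (by omega) ⟨hc1, fval f (by omega) hc2⟩
      · rintro ⟨iv, hlt⟩ hfalse
        have hf' : f ⟨k + 1 + iv, by omega⟩ = false := hfalse
        obtain ⟨j, hj, hfj⟩ := hz _ hf'
        have hjlt := j.isLt
        have hjn : (j:ℕ) = k + 1 + iv + 1 ∨ (j:ℕ) + 1 = k + 1 + iv := hj
        have hjk : (j:ℕ) ≠ k := by
          intro hc
          have : f ⟨k, by omega⟩ = false := fval f hc.symm hfj
          rw [this] at hktrue
          exact Bool.noConfusion hktrue
        refine ⟨⟨(j:ℕ) - (k + 1), by omega⟩, ?_, ?_⟩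
        · show (j:ℕ) - (k + 1) = iv + 1 ∨ (j:ℕ) - (k + 1) + 1 = iv
          omega
        · show f ⟨k + 1 + ((j:ℕ) - (k + 1)), by omega⟩ = false
          exact fval f (by omega) hfj
      · intro h
        show f ⟨k + 1 + 0, by omega⟩ = false
        have hnt : ¬ f ⟨k + 1, by omega⟩ = true := by
          intro hc
          exact hs k (by omega) ⟨hktrue, hc⟩
        exact fval f (by omega) (bff hnt)
  · rintro ⟨u, v⟩ hp
    rw [Finset.mem_coe, Finset.mem_product] at hp
    obtain ⟨hu, hv⟩ := hp
    obtain ⟨⟨hsu, hzu⟩, hulast⟩ := mem_Eset.mp hu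
    obtain ⟨⟨hsv, hzv⟩, hvfirst⟩ := mem_Dset.mp hv
    simp only [Finset.mem_coe, Finset.mem_filter]
    refine ⟨Finset.mem_univ _, ⟨?_, ?_⟩, glue_mid u v (by omega)⟩
    · intro i hi hc
      rcases Nat.lt_trichotomy i k with hik | hik | hik
      · have hc1 := hc.1
        rw [glue_lt u v hik] at hc1
        rcases Nat.lt_or_ge (i + 1) k with hik1 | hik1
        · have hc2 := hc.2
          rw [glue_lt u v hik1] at hc2
          exact hsu i (by omega) ⟨hc1, hc2⟩
        · -- i + 1 = k, so u (k-1) = true contradicts hulast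
          have hik1' : i + 1 = k := by omega
          have : u ⟨k - 1, by omega⟩ = false := hulast (by omega)
          rw [fval u (show k - 1 = i by omega) hc1] at this
          exact Bool.noConfusion this
      · subst hik
        have hc2 := hc.2
        rw [glue_gt u v (by omega) hi (by omega)] at hc2
        have : v ⟨i + 1 - (i + 1), by omega⟩ = false := by
          have h0 : v ⟨0, by omega⟩ = false := hvfirst (by omega)
          exact fval v (by omega) h0
        rw [this] at hc2
        exact Bool.noConfusion hc2
      · have hc1 := hc.1
        have hc2 := hc.2
        rw [glue_gt u v hik (by omega) (by omega)] at hc1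
        rw [glue_gt u v (by omega) hi (by omega)] at hc2
        refine hsv (i - (k + 1)) (by omega) ⟨hc1, ?_⟩
        exact fval v (by omega) hc2
    · rintro ⟨iv, hlt⟩ hfalse
      rcases Nat.lt_trichotomy iv k with hik | hik | hik
      · rw [glue_lt u v hik] at hfalse
        obtain ⟨j, hj, hfj⟩ := hzu _ hfalse
        have hjlt := j.isLt
        have hjn : (j:ℕ) = iv + 1 ∨ (j:ℕ) + 1 = iv := hj
        refine ⟨⟨(j:ℕ), by omega⟩, ?_, ?_⟩
        · show (j:ℕ) = iv + 1 ∨ (j:ℕ) + 1 = iv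
          omega
        · rw [glue_lt u v j.isLt]
          exact fval u rfl hfj
      · subst hik
        rw [glue_mid u v] at hfalse
        exact Bool.noConfusion hfalse
      · rw [glue_gt u v hik hlt (by omega)] at hfalse
        obtain ⟨j, hj, hfj⟩ := hzv _ hfalse
        have hjlt := j.isLt
        have hjn : (j:ℕ) = iv - (k + 1) + 1 ∨ (j:ℕ) + 1 = iv - (k + 1) := hj
        refine ⟨⟨k + 1 + (j:ℕ), by omega⟩, ?_, ?_⟩
        · show k + 1 + (j:ℕ) = iv + 1 ∨ k + 1 + (j:ℕ) + 1 = iv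
          omega
        · rw [glue_gt u v (by omega) (by omega) (by omega)]
          exact fval v (by omega) hfj
  · intro f hf
    simp only [Finset.mem_coe, Finset.mem_filter] at hf
    obtain ⟨-, -, hktrue⟩ := hf
    funext i
    obtain ⟨iv, hlt⟩ := i
    show glue k m (fun i : Fin k => f ⟨i.val, by have := i.isLt; omega⟩)
      (fun j : Fin m => f ⟨k + 1 + j.val, by have := j.isLt; omega⟩) ⟨iv, hlt⟩ = f ⟨iv, hlt⟩
    rcases Nat.lt_trichotomy iv k with hik | hik | hik
    · rw [glue_lt _ _ hik]
    · subst hik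
      rw [glue_mid]
      exact hktrue.symm
    · rw [glue_gt _ _ hik hlt (by omega)]
      show f ⟨k + 1 + (iv - (k + 1)), by omega⟩ = f ⟨iv, hlt⟩
      exact fval f (by omega) rfl
  · rintro ⟨u, v⟩ -
    simp only [Prod.mk.injEq]
    constructor
    · funext i
      obtain ⟨iv, hlt⟩ := i
      show glue k m u v ⟨iv, by omega⟩ = u ⟨iv, hlt⟩
      rw [glue_lt u v hlt]
    · funext i
      obtain ⟨iv, hlt⟩ := i
      show glue k m u v ⟨k + 1 + iv, by omega⟩ = v ⟨iv, hlt⟩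
      rw [glue_gt u v (by omega) (by omega) (by omega)]
      exact fval v (by omega) rfl

lemma count_marked' (n : ℕ) (k : Fin n) :
    (Finset.univ.filter fun f : Fin n → Bool => Persolus f ∧ f k = true).card
      = dcnt k.val * dcnt (n - 1 - k.val) := by
  obtain ⟨kv, hk⟩ := k
  obtain ⟨m, rfl⟩ : ∃ m, n = kv + 1 + m := ⟨n - 1 - kv, by omega⟩
  have hm : kv + 1 + m - 1 - kv = m := by omega
  rw [hm, ← ecnt_eq]
  exact count_marked kv m

lemma persolus_sum (n : ℕ) :
    persolusBitsum n = ∑ k : Fin n, dcnt k.val * dcnt (n - 1 - k.val) := by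
  calc persolusBitsum n
      = ∑ f : Fin n → Bool, ∑ k : Fin n, if Persolus f ∧ f k = true then 1 else 0 := by
        apply Finset.sum_congr rfl
        intro f _
        by_cases hf : Persolus f
        · simp only [if_pos hf, hf, true_and, bitsum, Finset.card_filter]
          simp
        · simp [hf]
    _ = ∑ k : Fin n, ∑ f : Fin n → Bool, if Persolus f ∧ f k = true then 1 else 0 :=
        Finset.sum_comm
    _ = ∑ k : Fin n, (Finset.univ.filter fun f : Fin n → Bool => Persolus f ∧ f k = true).card := by
        apply Finset.sum_congr rfl
        intro k _
        rw [Finset.card_filter]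
    _ = ∑ k : Fin n, dcnt k.val * dcnt (n - 1 - k.val) := by
        apply Finset.sum_congr rfl
        intro k _
        exact count_marked' n k

open PowerSeries in
lemma Dq_spec : (PowerSeries.mk fun n => (dcnt n : ℤ)) * (1 - (X : ℤ⟦X⟧) - X ^ 3)
    = 1 - X + X ^ 2 := by
  have hd3 : dcnt 3 = 2 := by
    have h := dcnt_rec 0
    have h2 := dcnt2
    have h0 := dcnt0
    norm_num at h
    omega
  ext n
  simp only [mul_sub, mul_one, map_sub, map_add, coeff_mk, coeff_one,
    PowerSeries.coeff_X, coeff_X_pow, coeff_mul_X_pow', coeff_zero_mul_X, coeff_succ_mul_X]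
  rcases n with _ | (_ | (_ | n))
  · norm_num [dcnt0]
  · norm_num [dcnt0, dcnt1]
  · norm_num [dcnt0, dcnt1, dcnt2]
  · have h3 : n + 1 + 1 + 1 - 3 = n := by omega
    rw [coeff_succ_mul_X, coeff_mk]
    rw [if_pos (by omega : 3 ≤ n + 1 + 1 + 1), h3]
    rw [if_neg (by omega), if_neg (by omega), if_neg (by omega)]
    have : dcnt (n + 1 + 1 + 1) = dcnt (n + 1 + 1) + dcnt n := by
      rw [show n + 1 + 1 + 1 = n + 3 by omega, show n + 1 + 1 = n + 2 by omega]
      exact dcnt_rec n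
    rw [this]
    push_cast
    ring

open PowerSeries in
lemma A_spec : (PowerSeries.mk fun n => (persolusBitsum n : ℤ))
    = X * (PowerSeries.mk fun n => (dcnt n : ℤ)) ^ 2 := by
  ext n
  rcases n with _ | n
  · simp [persolus_sum]
  · rw [coeff_succ_X_mul, coeff_mk, sq, PowerSeries.coeff_mul]
    simp only [coeff_mk]
    rw [Finset.Nat.sum_antidiagonal_eq_sum_range_succ (f := fun i j => ((dcnt i : ℤ) * dcnt j))]
    rw [persolus_sum]
    rw [show (∑ k : Fin (n+1), dcnt k.val * dcnt (n + 1 - 1 - k.val))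
        = ∑ k ∈ Finset.range (n+1), dcnt k * dcnt (n + 1 - 1 - k) from
      Fin.sum_univ_eq_sum_range (fun j => dcnt j * dcnt (n + 1 - 1 - j)) (n+1)]
    push_cast
    rfl

open PowerSeries in
theorem persolusBitsum_gf :
    (PowerSeries.mk (fun n => (persolusBitsum n : ℤ))) *
        ((1 - (X : ℤ⟦X⟧) - X ^ 3) ^ 2) = X * (1 - X + X ^ 2) ^ 2 ∧
    persolusBitsum 1 = 1 ∧ persolusBitsum 2 = 0 ∧ persolusBitsum 3 = 2 ∧
    persolusBitsum 4 = 4 ∧ persolusBitsum 5 = 5 ∧ persolusBitsum 6 = 10 := by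
  have hd3 : dcnt 3 = 2 := by
    have h := dcnt_rec 0
    have h2 := dcnt2
    have h0 := dcnt0
    norm_num at h
    omega
  have hd4 : dcnt 4 = 2 := by
    have h := dcnt_rec 1
    have h1 := dcnt1
    norm_num at h
    omega
  have hd5 : dcnt 5 = 3 := by
    have h := dcnt_rec 2
    have h2 := dcnt2
    norm_num at h
    omega
  have hsum : ∀ n, persolusBitsum n = ∑ k ∈ Finset.range n, dcnt k * dcnt (n - 1 - k) :=
    fun n => (persolus_sum n).trans
      (Fin.sum_univ_eq_sum_range (fun j => dcnt j * dcnt (n - 1 - j)) n)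
  refine ⟨?_, ?_, ?_, ?_, ?_, ?_, ?_⟩
  · rw [A_spec]
    calc X * (PowerSeries.mk fun n => (dcnt n : ℤ)) ^ 2 * (1 - (X:ℤ⟦X⟧) - X ^ 3) ^ 2
        = X * ((PowerSeries.mk fun n => (dcnt n : ℤ)) * (1 - (X:ℤ⟦X⟧) - X ^ 3)) ^ 2 := by
          ring
      _ = X * (1 - X + X ^ 2) ^ 2 := by rw [Dq_spec]
  · norm_num [hsum, Finset.sum_range_succ, dcnt0, dcnt1, dcnt2, hd3, hd4, hd5]
  · norm_num [hsum, Finset.sum_range_succ, dcnt0, dcnt1, dcnt2, hd3, hd4, hd5]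
  · norm_num [hsum, Finset.sum_range_succ, dcnt0, dcnt1, dcnt2, hd3, hd4, hd5]
  · norm_num [hsum, Finset.sum_range_succ, dcnt0, dcnt1, dcnt2, hd3, hd4, hd5]
  · norm_num [hsum, Finset.sum_range_succ, dcnt0, dcnt1, dcnt2, hd3, hd4, hd5]
  · norm_num [hsum, Finset.sum_range_succ, dcnt0, dcnt1, dcnt2, hd3, hd4, hd5]
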